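/- Let G be a digraph and f: V(G) → [0,∞) a discrete Morse function such that the out-degree and in-degree of every zero-point of f are both 1. Let G̃ be the M-collapse of (G, f). Then the inclusion i: G̃ → G induces isomorphisms on all path homology groups of digraphs. -/

import Mathlib

/-- A digraph: a vertex set together with an irreflexive edge relation supported on the
vertex set (edges are ordered pairs off the diagonal). -/
structure DiGraph (V : Type) where
  verts : Set V
  Edge : V → V → Prop
  edge_mem_left : ∀ u v, Edge u v → u ∈ verts
  edge_mem_right : ∀ u v, Edge u v → v ∈ verts
  edge_ne : ∀ u v, Edge u v → u ≠ v

variable {V : Type}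

/-- An allowed elementary path: a nonempty list of vertices of `G` such that each
consecutive pair is a directed edge of `G`. -/
def IsAllowed (G : DiGraph V) (p : List V) : Prop :=
  p ≠ [] ∧ (∀ v ∈ p, v ∈ G.verts) ∧ p.Chain' G.Edge

/-- `Del p q` : `p` is obtained from `q` by deleting one vertex. -/
def Del (p q : List V) : Prop := ∃ i < q.length, p = q.eraseIdx i

/-- Value of a function on vertices extended to a path: the sum over its vertices. -/
def fval (f : V → ℝ) (p : List V) : ℝ := (p.map f).sum

/-- A discrete Morse function on a digraph `G`: a nonnegative function on vertices such
that for every allowed elementary path `p` there is (i) at most one allowed elementary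
path obtained from `p` by deleting one vertex with the same `f`-value, and (ii) at most
one allowed elementary path obtained from `p` by inserting one vertex with the same
`f`-value. -/
def IsMorse (G : DiGraph V) (f : V → ℝ) : Prop :=
  (∀ v, 0 ≤ f v) ∧
  ∀ p, IsAllowed G p →
    ((∀ β β', IsAllowed G β → Del β p → fval f β = fval f p →
        IsAllowed G β' → Del β' p → fval f β' = fval f p → β = β') ∧
     (∀ α α', IsAllowed G α → Del p α → fval f α = fval f p →
        IsAllowed G α' → Del p α' → fval f α' = fval f p → α = α'))

/-- An allowed elementary path is critical if no allowed path obtained by deleting one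
vertex has the same `f`-value, and no allowed path obtained by inserting one vertex has
the same `f`-value. -/
def IsCritical (G : DiGraph V) (f : V → ℝ) (p : List V) : Prop :=
  (¬ ∃ β, IsAllowed G β ∧ Del β p ∧ fval f β = fval f p) ∧
  (¬ ∃ α, IsAllowed G α ∧ Del p α ∧ fval f α = fval f p)

/-- A directed loop: an allowed elementary path `v₀ v₁ ⋯ vₙ v₀` with `n ≥ 1`. -/
def IsLoop (G : DiGraph V) (p : List V) : Prop :=
  IsAllowed G p ∧ 3 ≤ p.length ∧ p.head? = p.getLast?

/-- A simplicial allowed elementary path: all vertices distinct. -/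
def Simplicial (G : DiGraph V) (p : List V) : Prop := IsAllowed G p ∧ p.Nodup

/-- A pair of the combinatorial discrete gradient vector field `M(G,f)`:
`β` is obtained from `α` by inserting one vertex, and `f(α) = f(β)`. -/
def MPair (G : DiGraph V) (f : V → ℝ) (α β : List V) : Prop :=
  IsAllowed G α ∧ IsAllowed G β ∧ Del α β ∧ fval f α = fval f β

/-- `H` is a sub-digraph of `G`. -/
def Subdigraph (H G : DiGraph V) : Prop :=
  H.verts ⊆ G.verts ∧ ∀ u v, H.Edge u v → G.Edge u v
variable (R : Type) [CommRing R]

/-- The boundary operator `∂ = Σ (−1)^i dᵢ` on the free module generated by all vertex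
sequences (paths), where `dᵢ` deletes the `i`-th vertex. -/
noncomputable def bdry : (List V →₀ R) →ₗ[R] (List V →₀ R) :=
  Finsupp.lsum R fun p =>
    ∑ i ∈ Finset.range p.length, ((-1 : R) ^ i) • Finsupp.lsingle (p.eraseIdx i)

/-- `P_n(G)`: the free `R`-module generated by allowed elementary `n`-paths of `G`
(realized as the submodule of elements supported on allowed lists of length `n+1`). -/
noncomputable def PMod (G : DiGraph V) (n : ℕ) : Submodule R (List V →₀ R) :=
  Finsupp.supported R R {p | IsAllowed G p ∧ p.length = n + 1}

/-- `Ω_n(G) = P_n(G) ∩ ∂⁻¹ P_{n−1}(G)` (with `Ω₀(G) = P₀(G)`). -/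
noncomputable def OmegaMod (G : DiGraph V) : ℕ → Submodule R (List V →₀ R)
  | 0 => PMod R G 0
  | (n+1) => PMod R G (n+1) ⊓ Submodule.comap (bdry (V := V) R) (PMod R G n)

/-- The cycles of the chain complex `Ω_*(G)` in degree `n`. -/
noncomputable def cyc (G : DiGraph V) (n : ℕ) : Submodule R (List V →₀ R) :=
  OmegaMod R G n ⊓ LinearMap.ker (bdry (V := V) R)

/-- The boundaries of the chain complex `Ω_*(G)` in degree `n`. -/
noncomputable def bds (G : DiGraph V) (n : ℕ) : Submodule R (List V →₀ R) :=
  Submodule.map (bdry (V := V) R) (OmegaMod R G (n + 1))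

/-- The `n`-th path homology of the digraph `G` with coefficients in `R`: the image of
the `n`-cycles of `Ω_*(G)` in the quotient by the `n`-boundaries. -/
noncomputable def PathHomology (G : DiGraph V) (n : ℕ) :
    Submodule R ((List V →₀ R) ⧸ bds R G n) :=
  Submodule.map (bds R G n).mkQ (cyc R G n)

theorem isAllowed_mono {H G : DiGraph V} (hsub : Subdigraph H G) {p : List V}
    (hp : IsAllowed H p) : IsAllowed G p :=
  ⟨hp.1, fun v hv => hsub.1 (hp.2.1 v hv),
    List.IsChain.imp (fun a b h => hsub.2 a b h) hp.2.2⟩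

theorem pmod_mono {H G : DiGraph V} (hsub : Subdigraph H G) (n : ℕ) :
    PMod R H n ≤ PMod R G n :=
  Finsupp.supported_mono fun _p hp => ⟨isAllowed_mono hsub hp.1, hp.2⟩

theorem omegaMod_mono {H G : DiGraph V} (hsub : Subdigraph H G) (n : ℕ) :
    OmegaMod R H n ≤ OmegaMod R G n := by
  cases n with
  | zero => exact pmod_mono R hsub 0
  | succ n =>
      exact inf_le_inf (pmod_mono R hsub (n + 1)) (Submodule.comap_mono (pmod_mono R hsub n))

theorem cyc_mono {H G : DiGraph V} (hsub : Subdigraph H G) (n : ℕ) :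
    cyc R H n ≤ cyc R G n :=
  inf_le_inf (omegaMod_mono R hsub n) le_rfl

theorem bds_mono {H G : DiGraph V} (hsub : Subdigraph H G) (n : ℕ) :
    bds R H n ≤ bds R G n :=
  Submodule.map_mono (omegaMod_mono R hsub (n + 1))

/-- The map on the ambient quotients induced by the inclusion of a sub-digraph. -/
noncomputable def inducedQ {H G : DiGraph V} (hsub : Subdigraph H G) (n : ℕ) :
    ((List V →₀ R) ⧸ bds R H n) →ₗ[R] ((List V →₀ R) ⧸ bds R G n) :=
  Submodule.mapQ _ _ LinearMap.id (by
    intro x hx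
    exact bds_mono R hsub n hx)

/-- The map induced on path homology by the inclusion of a sub-digraph. -/
noncomputable def inducedH {H G : DiGraph V} (hsub : Subdigraph H G) (n : ℕ) :
    PathHomology R H n →ₗ[R] PathHomology R G n :=
  LinearMap.restrict (inducedQ R hsub n) (by
    rintro x ⟨c, hc, rfl⟩
    exact ⟨c, cyc_mono R hsub n hc, by simp [inducedQ, Submodule.mapQ_apply]⟩)

/-- One-step `M`-collapse of a pair (digraph, discrete Morse function): a zero-point `v`
with unique in-neighbor `u` and unique out-neighbor `w` and with `u→w` an edge is
removed, together with the edges `u→v` and `v→w`; the function is unchanged. -/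
def OneStepCollapse (P Q : DiGraph V × (V → ℝ)) : Prop :=
  ∃ u v w, P.2 v = 0 ∧ P.1.Edge u v ∧ P.1.Edge v w ∧
    (∀ x, P.1.Edge x v → x = u) ∧ (∀ x, P.1.Edge v x → x = w) ∧ P.1.Edge u w ∧
    Q.1.verts = P.1.verts \ {v} ∧
    (∀ a b, Q.1.Edge a b ↔ P.1.Edge a b ∧ ¬(a = u ∧ b = v) ∧ ¬(a = v ∧ b = w)) ∧
    Q.2 = P.2

/-- The full `M`-collapse: iterate one-step `M`-collapses until no triple `(u,v,w)` with
`f(v) = 0`, `u→v→w` and `u→w` remains. -/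
def FullCollapse (P Q : DiGraph V × (V → ℝ)) : Prop :=
  Relation.ReflTransGen OneStepCollapse P Q ∧
  ¬ ∃ u v w, Q.2 v = 0 ∧ Q.1.Edge u v ∧ Q.1.Edge v w ∧ Q.1.Edge u w

section
variable {V : Type} (R : Type) [CommRing R]
namespace Collapse
open Finsupp
open scoped Classical

noncomputable def C (a : V) : (List V →₀ R) →ₗ[R] (List V →₀ R) :=
  Finsupp.lmapDomain R R (a :: ·)

lemma C_single (a : V) (l : List V) (c : R) :
    C R a (Finsupp.single l c) = Finsupp.single (a :: l) c := by
  simp [C, Finsupp.mapDomain_single]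

variable (v w : V)

noncomputable def rr (x : V) : V := if x = v then w else x

noncomputable def sg (l : List V) : List V := l.map (rr v w)

lemma sg_nil : sg v w [] = [] := rfl
lemma sg_cons (a : V) (l : List V) : sg v w (a :: l) = rr v w a :: sg v w l := rfl
lemma rr_v : rr v w v = w := if_pos rfl
lemma rr_of_ne {x : V} (h : x ≠ v) : rr v w x = x := if_neg h

def hasVW : List V → Prop
  | a :: b :: l => (a = v ∧ b = w) ∨ hasVW (b :: l)
  | _ => False

def DefFree : List V → Prop
  | a :: b :: l => (a = v → b = w) ∧ DefFree (b :: l)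
  | _ => True

lemma hasVW_nil : hasVW v w [] ↔ False := by simp [hasVW]
lemma hasVW_single (a : V) : hasVW v w [a] ↔ False := by simp [hasVW]
lemma hasVW_cons₂ (a b : V) (l : List V) :
    hasVW v w (a :: b :: l) ↔ (a = v ∧ b = w) ∨ hasVW v w (b :: l) := Iff.rfl

noncomputable def xifun : List V → (List V →₀ R)
  | [] => 0
  | a :: q =>
      (if a = v ∧ q ≠ [] ∧ q.head? ≠ some w ∧ DefFree v w q ∧ v ∉ q.dropLast
        then Finsupp.single (v :: w :: sg v w q) (1:R) else 0)
      - Finsupp.mapDomain (a :: ·) (xifun q)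

noncomputable def tauM : (List V →₀ R) →ₗ[R] (List V →₀ R) :=
  Finsupp.lsum R fun l =>
    if List.Chain' (· ≠ ·) (sg v w l) then Finsupp.lsingle (sg v w l) else 0

noncomputable def LM : (List V →₀ R) →ₗ[R] (List V →₀ R) :=
  Finsupp.lsum R fun l =>
    if l.getLast? = some v then ((-1:R)^(l.length - 1)) • Finsupp.lsingle (l ++ [w]) else 0

noncomputable def psiM : (List V →₀ R) →ₗ[R] (List V →₀ R) :=
  Finsupp.lsum R fun l => if hasVW v w l then 0 else Finsupp.lsingle (sg v w l)

noncomputable def xiM : (List V →₀ R) →ₗ[R] (List V →₀ R) :=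
  Finsupp.lsum R fun l => LinearMap.toSpanSingleton R _ (xifun R v w l)

lemma tauM_single (l : List V) (c : R) :
    tauM R v w (Finsupp.single l c)
      = if List.Chain' (· ≠ ·) (sg v w l) then Finsupp.single (sg v w l) c else 0 := by
  rw [tauM, Finsupp.lsum_single]; split <;> simp [Finsupp.lsingle_apply]

lemma LM_single (l : List V) (c : R) :
    LM R v w (Finsupp.single l c)
      = if l.getLast? = some v
        then ((-1:R)^(l.length - 1)) • Finsupp.single (l ++ [w]) c else 0 := by
  rw [LM, Finsupp.lsum_single]; split <;> simp [Finsupp.lsingle_apply]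

lemma psiM_single (l : List V) (c : R) :
    psiM R v w (Finsupp.single l c)
      = if hasVW v w l then 0 else Finsupp.single (sg v w l) c := by
  rw [psiM, Finsupp.lsum_single]; split <;> simp [Finsupp.lsingle_apply]

lemma xiM_single (l : List V) (c : R) :
    xiM R v w (Finsupp.single l c) = c • xifun R v w l := by
  rw [xiM, Finsupp.lsum_single, LinearMap.toSpanSingleton_apply]

/-- extensionality helper -/
lemma opext {T T' : (List V →₀ R) →ₗ[R] (List V →₀ R)}
    (h : ∀ l c, T (Finsupp.single l c) = T' (Finsupp.single l c)) (x : List V →₀ R) :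
    T x = T' x :=
  DFunLike.congr_fun (Finsupp.lhom_ext h) x

lemma psi_C {a : V} (ha : a ≠ v) (x : List V →₀ R) :
    psiM R v w (C R a x) = C R a (psiM R v w x) := by
  refine opext R (T := (psiM R v w).comp (C R a)) (T' := (C R a).comp (psiM R v w)) ?_ x
  intro l c
  simp only [LinearMap.comp_apply, C_single, psiM_single]
  cases l with
  | nil => simp [hasVW, sg_cons, sg_nil, rr_of_ne v w ha, C_single]
  | cons b m =>
      rw [hasVW_cons₂]
      have : ¬ (a = v ∧ b = w) := fun hh => ha hh.1
      simp only [this, false_or]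
      split
      · simp
      · rw [C_single]; rw [sg_cons, rr_of_ne v w ha]

lemma L_C {a : V} (ha : a ≠ v) (x : List V →₀ R) :
    LM R v w (C R a x) = - C R a (LM R v w x) := by
  refine opext R (T := (LM R v w).comp (C R a)) (T' := -((C R a).comp (LM R v w))) ?_ x
  intro l c
  simp only [LinearMap.comp_apply, C_single, LM_single, LinearMap.neg_apply]
  cases l with
  | nil => simp [Option.some_inj, ha]
  | cons b m =>
      rw [List.getLast?_cons_cons]
      split
      · rw [map_smul, C_single]
        simp only [List.cons_append, List.length_cons, Nat.add_sub_cancel]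
        rw [pow_succ, mul_neg_one, neg_smul]
      · simp

lemma xi_C {a : V} (ha : a ≠ v) (x : List V →₀ R) :
    xiM R v w (C R a x) = - C R a (xiM R v w x) := by
  refine opext R (T := (xiM R v w).comp (C R a)) (T' := -((C R a).comp (xiM R v w))) ?_ x
  intro l c
  simp only [LinearMap.comp_apply, C_single, xiM_single, LinearMap.neg_apply]
  rw [show xifun R v w (a :: l)
      = (if a = v ∧ l ≠ [] ∧ l.head? ≠ some w ∧ DefFree v w l ∧ v ∉ l.dropLast
          then Finsupp.single (v :: w :: sg v w l) (1:R) else 0)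
        - Finsupp.mapDomain (a :: ·) (xifun R v w l) from rfl]
  have : ¬ (a = v ∧ l ≠ [] ∧ l.head? ≠ some w ∧ DefFree v w l ∧ v ∉ l.dropLast) :=
    fun hh => ha hh.1
  rw [if_neg this, zero_sub, smul_neg]
  congr 1
  rw [show (C R a) (c • xifun R v w l) = Finsupp.mapDomain (a :: ·) (c • xifun R v w l) from rfl]
  rw [Finsupp.mapDomain_smul]

end Collapse
end
section
variable {V : Type} (R : Type) [CommRing R]
namespace Collapse
open Finsupp
lemma bdry_single (l : List V) (c : R) :
    bdry R (Finsupp.single l c)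
      = ∑ i ∈ Finset.range l.length, ((-1:R)^i) • Finsupp.single (l.eraseIdx i) c := by
  rw [bdry, Finsupp.lsum_single]
  simp [Finsupp.lsingle_apply]

lemma bdry_single_nil (c : R) : bdry R (Finsupp.single ([] : List V) c) = 0 := by
  simp [bdry_single]

lemma bdry_single_cons (a : V) (t : List V) (c : R) :
    bdry R (Finsupp.single (a :: t) c)
      = Finsupp.single t c - C R a (bdry R (Finsupp.single t c)) := by
  rw [bdry_single, bdry_single, map_sum]
  simp only [map_smul, C_single]
  rw [List.length_cons, Finset.sum_range_succ']
  have h1 : ∀ k, ((-1:R)^(k+1)) • Finsupp.single ((a :: t).eraseIdx (k+1)) c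
      = -(((-1:R)^k) • Finsupp.single (a :: t.eraseIdx k) c) := by
    intro k
    rw [List.eraseIdx_cons_succ, pow_succ, mul_neg_one, neg_smul]
  rw [Finset.sum_congr rfl (fun k _ => h1 k)]
  simp [sub_eq_add_neg, add_comm]

lemma bdry_C (a : V) (x : List V →₀ R) :
    bdry R (C R a x) = x - C R a (bdry R x) := by
  have h : (bdry R).comp (C R a)
      = LinearMap.id - (C R a).comp (bdry R) := by
    apply Finsupp.lhom_ext
    intro l c
    simp [LinearMap.comp_apply, C_single, bdry_single_cons, LinearMap.sub_apply]
  simpa [LinearMap.comp_apply, LinearMap.sub_apply] using DFunLike.congr_fun h x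

end Collapse
end
section
variable {V : Type} (R : Type) [CommRing R]
namespace Collapse
open Finsupp
open scoped Classical

variable (v w : V)

/-- CC-lemmas: need only `v ≠ w`. -/
lemma psi_CC (hvw : v ≠ w) (x : List V →₀ R) :
    psiM R v w (C R v (C R w x)) = 0 := by
  refine opext R (T := ((psiM R v w).comp (C R v)).comp (C R w)) (T' := 0) ?_ x
  intro l c
  simp only [LinearMap.comp_apply, C_single, psiM_single, LinearMap.zero_apply]
  rw [if_pos]
  exact Or.inl ⟨rfl, rfl⟩

lemma L_CC (hvw : v ≠ w) (x : List V →₀ R) :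
    LM R v w (C R v (C R w x)) = C R v (C R w (LM R v w x)) := by
  refine opext R (T := ((LM R v w).comp (C R v)).comp (C R w))
    (T' := ((C R v).comp (C R w)).comp (LM R v w)) ?_ x
  intro l c
  simp only [LinearMap.comp_apply, C_single, LM_single]
  cases l with
  | nil =>
      have hA : (v :: w :: ([] : List V)).getLast? = some w := by simp
      have hB : (([] : List V)).getLast? = (none : Option V) := rfl
      rw [hA, hB]
      rw [if_neg (fun hh => hvw (Option.some_inj.mp hh).symm), if_neg (by simp)]
      simp
  | cons b m =>
      rw [List.getLast?_cons_cons, List.getLast?_cons_cons]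
      split
      · rw [map_smul, map_smul, C_single, C_single]
        simp only [List.cons_append, List.length_cons, Nat.add_sub_cancel]
        rw [show m.length + 1 + 1 = m.length + 2 from rfl, pow_add]
        norm_num
      · simp

lemma xifun_cons (a : V) (q : List V) :
    xifun R v w (a :: q)
      = (if a = v ∧ q ≠ [] ∧ q.head? ≠ some w ∧ DefFree v w q ∧ v ∉ q.dropLast
          then Finsupp.single (v :: w :: sg v w q) (1:R) else 0)
        - Finsupp.mapDomain (a :: ·) (xifun R v w q) := rfl

lemma xi_CC (hvw : v ≠ w) (x : List V →₀ R) :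
    xiM R v w (C R v (C R w x)) = C R v (C R w (xiM R v w x)) := by
  refine opext R (T := ((xiM R v w).comp (C R v)).comp (C R w))
    (T' := ((C R v).comp (C R w)).comp (xiM R v w)) ?_ x
  intro l c
  simp only [LinearMap.comp_apply, C_single, xiM_single]
  rw [xifun_cons, xifun_cons]
  rw [if_neg (by rintro ⟨-, -, hh, -⟩; exact hh rfl)]
  rw [if_neg (by rintro ⟨hh, -⟩; exact hvw hh.symm)]
  have hC : ∀ (a : V) (y : List V →₀ R), Finsupp.mapDomain (a :: ·) y = C R a y := fun _ _ => rfl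
  rw [zero_sub, zero_sub, hC, hC, map_neg, neg_neg, ← map_smul, ← map_smul]

end Collapse
end
section
variable {V : Type} (R : Type) [CommRing R]
namespace Collapse
open Finsupp
open scoped Classical

/-- The data of a one-step collapse configuration. -/
structure CData (G G' : DiGraph V) (u v w : V) : Prop where
  huv : G.Edge u v
  hvw : G.Edge v w
  huw : G.Edge u w
  hin : ∀ x, G.Edge x v → x = u
  hout : ∀ x, G.Edge v x → x = w
  hverts : G'.verts = G.verts \ {v}
  hedge : ∀ a b, G'.Edge a b ↔ G.Edge a b ∧ ¬(a = u ∧ b = v) ∧ ¬(a = v ∧ b = w)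

variable {G G' : DiGraph V} {u v w : V}

lemma cd_vw (h : CData G G' u v w) : v ≠ w := G.edge_ne _ _ h.hvw
lemma cd_uv (h : CData G G' u v w) : u ≠ v := G.edge_ne _ _ h.huv
lemma cd_uw (h : CData G G' u v w) : u ≠ w := G.edge_ne _ _ h.huw
lemma cd_no_wv (h : CData G G' u v w) : ¬ G.Edge w v := by
  intro he
  exact cd_uw h ((h.hin w he).symm)

lemma allowed_cons_edge {a b : V} {t : List V} (hp : IsAllowed G (a :: b :: t)) :
    G.Edge a b := (List.isChain_cons_cons.mp hp.2.2).1

lemma allowed_tail {a b : V} {t : List V} (hp : IsAllowed G (a :: b :: t)) :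
    IsAllowed G (b :: t) :=
  ⟨List.cons_ne_nil _ _, fun x hx => hp.2.1 x (List.mem_cons_of_mem _ hx),
    (List.isChain_cons_cons.mp hp.2.2).2⟩

/-- For an edge `(a,b)` of `G`: `rr a = rr b ↔ (a = v ∧ b = w)`. -/
lemma rr_eq_iff (h : CData G G' u v w) {a b : V} (he : G.Edge a b) :
    rr v w a = rr v w b ↔ (a = v ∧ b = w) := by
  constructor
  · intro hr
    by_cases hav : a = v
    · by_cases hbv : b = v
      · exact absurd (hav.trans hbv.symm) (G.edge_ne _ _ he)
      · rw [hav, rr_v, rr_of_ne v w hbv] at hr; exact ⟨hav, hr.symm⟩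
    · by_cases hbv : b = v
      · rw [rr_of_ne v w hav, hbv, rr_v] at hr
        rw [hbv] at he
        exact absurd (hr ▸ he) (cd_no_wv h)
      · rw [rr_of_ne v w hav, rr_of_ne v w hbv] at hr
        exact absurd hr (G.edge_ne _ _ he)
  · rintro ⟨ha, hb⟩
    rw [ha, hb, rr_v, rr_of_ne v w (Ne.symm (cd_vw h))]

lemma reg_iff (h : CData G G' u v w) (p : List V) (hp : IsAllowed G p) :
    List.Chain' (· ≠ ·) (sg v w p) ↔ ¬ hasVW v w p := by
  induction p with
  | nil => simp [sg_nil, hasVW, List.Chain', List.isChain_nil]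
  | cons a t ih =>
      cases t with
      | nil => simp [sg, hasVW, List.Chain', List.isChain_singleton]
      | cons b m =>
          have he : G.Edge a b := allowed_cons_edge hp
          have ht : IsAllowed G (b :: m) := allowed_tail hp
          rw [sg_cons, sg_cons]
          simp only [List.Chain']; rw [List.isChain_cons_cons, hasVW_cons₂, ← sg_cons]
          rw [not_or]
          have := rr_eq_iff h he
          constructor
          · rintro ⟨h1, h2⟩
            exact ⟨fun hh => h1 (this.mpr hh), ((ih ht).mp h2)⟩
          · rintro ⟨h1, h2⟩
            exact ⟨fun hh => h1 (this.mp hh), (ih ht).mpr h2⟩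

lemma hasVW_iff_mem (h : CData G G' u v w) (p : List V) (hp : IsAllowed G p) :
    hasVW v w p ↔ v ∈ p.dropLast := by
  induction p with
  | nil => simp [hasVW]
  | cons a t ih =>
      cases t with
      | nil => simp [hasVW]
      | cons b m =>
          have he : G.Edge a b := allowed_cons_edge hp
          have ht : IsAllowed G (b :: m) := allowed_tail hp
          rw [hasVW_cons₂]
          rw [show (a :: b :: m).dropLast = a :: (b :: m).dropLast from rfl]
          rw [List.mem_cons, ih ht]
          constructor
          · rintro (⟨rfl, -⟩ | hh)
            · exact Or.inl rfl
            · exact Or.inr hh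
          · rintro (rfl | hh)
            · exact Or.inl ⟨rfl, h.hout b he⟩
            · exact Or.inr hh

lemma DefFree_of_allowed (h : CData G G' u v w) (p : List V) (hp : IsAllowed G p) : DefFree v w p := by
  induction p with
  | nil => trivial
  | cons a t ih =>
      cases t with
      | nil => trivial
      | cons b m =>
          exact ⟨fun hav => h.hout b (hav ▸ allowed_cons_edge hp),
            ih (allowed_tail hp)⟩

lemma xifun_allowed (h : CData G G' u v w) (p : List V) (hp : IsAllowed G p) : xifun R v w p = 0 := by
  induction p with
  | nil => rfl
  | cons a t ih =>
      rw [xifun_cons]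
      have hz : xifun R v w t = 0 := by
        cases t with
        | nil => rfl
        | cons b m => exact ih (allowed_tail hp)
      rw [hz, Finsupp.mapDomain_zero, sub_zero]
      rw [if_neg]
      rintro ⟨rfl, hne, hh, -, -⟩
      cases t with
      | nil => exact hne rfl
      | cons b m => exact hh (by rw [List.head?_cons, h.hout b (allowed_cons_edge hp)])

lemma sg_chain (h : CData G G' u v w) :
    ∀ (p : List V), List.Chain' G.Edge p → List.Chain' (· ≠ ·) (sg v w p) →
      List.Chain' G'.Edge (sg v w p) := by
  intro p
  induction p with
  | nil => intro _ _; simp [sg, List.Chain', List.isChain_nil]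
  | cons a t ih =>
      intro hp hreg
      cases t with
      | nil => simp [sg, List.Chain', List.isChain_singleton]
      | cons b m =>
          have he : G.Edge a b := (List.isChain_cons_cons.mp hp).1
          rw [sg_cons, sg_cons] at hreg ⊢
          simp only [List.Chain'] at hreg ⊢; rw [List.isChain_cons_cons] at hreg ⊢
          refine ⟨?_, by rw [← sg_cons] at hreg ⊢
                         exact ih (List.isChain_cons_cons.mp hp).2 hreg.2⟩
          have hne := hreg.1
          by_cases hbv : b = v
          · have hau : a = u := h.hin a (by rwa [hbv] at he)
            rw [hau, hbv, rr_v, rr_of_ne v w (cd_uv h)]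
            rw [h.hedge]
            exact ⟨h.huw, fun hh => (cd_vw h) hh.2.symm, fun hh => (cd_uv h) hh.1⟩
          · by_cases hav : a = v
            · have hbw : b = w := h.hout b (by rwa [hav] at he)
              rw [hav, hbw, rr_v, rr_of_ne v w (fun hh => (cd_vw h) hh.symm)] at hne
              exact absurd rfl hne
            · rw [rr_of_ne v w hav, rr_of_ne v w hbv]
              rw [h.hedge]
              exact ⟨he, fun hh => hbv hh.2, fun hh => hav hh.1⟩

/-- allowed path of `G` with regular image is an allowed path of `G'`. -/
lemma sg_allowed (h : CData G G' u v w) (p : List V) (hp : IsAllowed G p)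
    (hreg : List.Chain' (· ≠ ·) (sg v w p)) : IsAllowed G' (sg v w p) := by
  refine ⟨by simpa [sg] using hp.1, ?_, ?_⟩
  · intro x hx
    rw [h.hverts]
    obtain ⟨y, hy, rfl⟩ := List.mem_map.mp hx
    by_cases hyv : y = v
    · subst hyv
      rw [rr_v]
      exact ⟨G.edge_mem_right _ _ h.hvw, fun hh => (cd_vw h) hh.symm⟩
    · rw [rr_of_ne v w hyv]
      exact ⟨hp.2.1 y hy, hyv⟩
  · exact sg_chain h p hp.2.2 hreg

lemma sg_of_no_v {p : List V} (hnv : v ∉ p) : sg v w p = p := by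
  rw [sg, List.map_congr_left, List.map_id]
  intro x hx
  exact rr_of_ne v w (fun hh => hnv (hh ▸ hx))

lemma allowed_G'_no_v (h : CData G G' u v w) {p : List V} (hp : IsAllowed G' p) : v ∉ p := by
  intro hv
  have := hp.2.1 v hv
  rw [h.hverts] at this
  exact this.2 rfl

lemma allowed_G'_reg {p : List V} (hp : IsAllowed G' p) : List.Chain' (· ≠ ·) p :=
  List.IsChain.imp (fun a b hab => G'.edge_ne a b hab) hp.2.2

lemma tau_fix_single (h : CData G G' u v w) {p : List V} (hp : IsAllowed G' p) (c : R) :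
    tauM R v w (Finsupp.single p c) = Finsupp.single p c := by
  rw [tauM_single, sg_of_no_v (allowed_G'_no_v h hp), if_pos (allowed_G'_reg hp)]

lemma hasVW_mem_v {p : List V} (hh : hasVW v w p) : v ∈ p := by
  induction p with
  | nil => exact absurd hh (by simp [hasVW])
  | cons a t ih =>
      cases t with
      | nil => exact absurd hh (by simp [hasVW])
      | cons b m =>
          rcases hh with ⟨rfl, -⟩ | hh
          · exact List.mem_cons_self
          · exact List.mem_cons_of_mem _ (ih hh)

lemma psi_fix_single (h : CData G G' u v w) {p : List V} (hp : IsAllowed G' p) (c : R) :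
    psiM R v w (Finsupp.single p c) = Finsupp.single p c := by
  rw [psiM_single, if_neg (fun hh => allowed_G'_no_v h hp (hasVW_mem_v hh)),
    sg_of_no_v (allowed_G'_no_v h hp)]

lemma allowed_append_w (h : CData G G' u v w) {p : List V} (hp : IsAllowed G p) (hl : p.getLast? = some v) :
    IsAllowed G (p ++ [w]) := by
  refine ⟨by simp, ?_, ?_⟩
  · intro x hx
    rcases List.mem_append.mp hx with hx | hx
    · exact hp.2.1 x hx
    · rw [List.mem_singleton.mp hx]
      exact G.edge_mem_right _ _ h.hvw
  · simp only [List.Chain']; rw [List.isChain_append]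
    refine ⟨hp.2.2, List.isChain_singleton _, ?_⟩
    intro x hx y hy
    rw [hl] at hx
    rw [Option.mem_def, Option.some_inj] at hx
    have hyw : w = y := by simpa using hy
    rw [← hx, ← hyw]
    exact h.hvw

end Collapse
end
section
variable {V : Type} (R : Type) [CommRing R]
namespace Collapse
open Finsupp
open scoped Classical

variable {G G' : DiGraph V} {u v w : V}

/-- `L` two-cons recursion (valid for any head). -/
lemma LM_cons₂ (v w a b : V) (m : List V) (c : R) :
    LM R v w (Finsupp.single (a :: b :: m) c)
      = - C R a (LM R v w (Finsupp.single (b :: m) c)) := by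
  rw [LM_single, LM_single, List.getLast?_cons_cons]
  split
  · rw [map_smul, C_single]
    simp only [List.cons_append, List.length_cons, Nat.add_sub_cancel]
    rw [pow_succ, mul_neg_one, neg_smul]
  · simp

lemma tau_cons_of_ne (h : CData G G' u v w) {a b : V} {m : List V}
    (hp : IsAllowed G (a :: b :: m)) (hav : a ≠ v) (c : R) :
    tauM R v w (Finsupp.single (a :: b :: m) c)
      = C R a (tauM R v w (Finsupp.single (b :: m) c)) := by
  have he := allowed_cons_edge hp
  have harb : rr v w a ≠ rr v w b := fun hh => hav ((rr_eq_iff h he).mp hh).1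
  rw [tauM_single, tauM_single]
  by_cases hreg : List.Chain' (· ≠ ·) (sg v w (b :: m))
  · rw [if_pos, if_pos hreg, C_single, sg_cons, rr_of_ne v w hav]
    simp only [List.Chain']; rw [sg_cons, sg_cons, List.isChain_cons_cons]
    rw [sg_cons] at hreg
    exact ⟨harb, hreg⟩
  · rw [if_neg, if_neg hreg, map_zero]
    intro hh
    simp only [List.Chain'] at hh; rw [sg_cons, sg_cons, List.isChain_cons_cons, ← sg_cons] at hh
    exact hreg hh.2

lemma tau_eq_psi_single (h : CData G G' u v w) {p : List V} (hp : IsAllowed G p) (c : R) :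
    tauM R v w (Finsupp.single p c) = psiM R v w (Finsupp.single p c) := by
  rw [tauM_single, psiM_single]
  by_cases hh : hasVW v w p
  · rw [if_neg (fun hr => ((reg_iff h p hp).mp hr) hh), if_pos hh]
  · rw [if_pos ((reg_iff h p hp).mpr hh), if_neg hh]

lemma tau_vw_zero (h : CData G G' u v w) (t' : List V) (c : R) :
    tauM R v w (Finsupp.single (v :: w :: t') c) = 0 := by
  rw [tauM_single, if_neg]
  intro hh
  simp only [List.Chain'] at hh; rw [sg_cons, sg_cons, rr_v, rr_of_ne v w (Ne.symm (cd_vw h)), List.isChain_cons_cons] at hh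
  exact hh.1 rfl

lemma psi_w_eq_psi_v (h : CData G G' u v w) {t' : List V}
    (ht : IsAllowed G (w :: t')) (c : R) :
    psiM R v w (Finsupp.single (w :: t') c) = psiM R v w (Finsupp.single (v :: t') c) := by
  rw [psiM_single, psiM_single]
  cases t' with
  | nil =>
      rw [if_neg (by simp [hasVW]), if_neg (by simp [hasVW])]
      rw [sg_cons, sg_cons, rr_v, rr_of_ne v w (Ne.symm (cd_vw h))]
  | cons c' m =>
      have he : G.Edge w c' := allowed_cons_edge ht
      have hcw : c' ≠ w := fun hh => (G.edge_ne w c' he) hh.symm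
      have h1 : hasVW v w (w :: c' :: m) ↔ hasVW v w (c' :: m) := by
        rw [hasVW_cons₂]
        simp only [or_iff_right_iff_imp]
        rintro ⟨hh, -⟩
        exact absurd hh.symm (cd_vw h)
      have h2 : hasVW v w (v :: c' :: m) ↔ hasVW v w (c' :: m) := by
        rw [hasVW_cons₂]
        simp only [or_iff_right_iff_imp]
        rintro ⟨-, hh⟩
        exact absurd hh hcw
      rw [h1, h2]
      simp only [sg_cons, rr_v, rr_of_ne v w (Ne.symm (cd_vw h))]

/-- **Identity 1**: `∂ ∘ τ = Ψ ∘ ∂` on allowed paths. -/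
lemma key_I1 (h : CData G G' u v w) :
    ∀ (n : ℕ) (p : List V), p.length ≤ n → IsAllowed G p →
      bdry R (tauM R v w (Finsupp.single p (1:R)))
        = psiM R v w (bdry R (Finsupp.single p (1:R))) := by
  intro n
  induction n with
  | zero =>
      intro p hl hp
      interval_cases hlen : p.length
      · exact absurd (List.length_eq_zero_iff.mp hlen) hp.1
  | succ n ih =>
      intro p hl hp
      match p with
      | [a] =>
          rw [tauM_single, if_pos (by rw [sg_cons, sg_nil]; exact List.isChain_singleton _)]
          rw [sg_cons, sg_nil]
          rw [show bdry R (Finsupp.single [rr v w a] (1:R)) = Finsupp.single [] 1 by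
            rw [bdry_single]; simp]
          rw [show bdry R (Finsupp.single [a] (1:R)) = Finsupp.single [] 1 by
            rw [bdry_single]; simp]
          rw [psiM_single, if_neg (by simp [hasVW]), sg_nil]
      | a :: b :: t' =>
          have he : G.Edge a b := allowed_cons_edge hp
          have ht : IsAllowed G (b :: t') := allowed_tail hp
          have hlt : (b :: t').length ≤ n := by
            simp at hl ⊢; omega
          by_cases hav : a = v
          · -- a = v hence b = w
            have hbw : b = w := h.hout b (by rwa [hav] at he)
            rw [hav, hbw]
            rw [hbw] at ht
            rw [tau_vw_zero (R := R) h, map_zero]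
            rw [bdry_single_cons, bdry_single_cons, map_sub, map_sub, map_sub, C_single]
            rw [psi_CC R v w (cd_vw h)]
            rw [psi_w_eq_psi_v (R := R) h ht]
            abel
          · -- a ≠ v
            rw [tau_cons_of_ne (R := R) h hp hav, bdry_C, ih _ hlt ht]
            conv_rhs => rw [bdry_single_cons]
            rw [map_sub, psi_C R v w hav]
            rw [tau_eq_psi_single (R := R) h ht]

/-- **Identity 2**: the chain homotopy identity on allowed paths. -/
lemma key_I2 (h : CData G G' u v w) :
    ∀ (n : ℕ) (p : List V), p.length ≤ n → IsAllowed G p →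
      tauM R v w (Finsupp.single p (1:R)) - Finsupp.single p (1:R)
        = bdry R (LM R v w (Finsupp.single p (1:R)))
          + LM R v w (bdry R (Finsupp.single p (1:R)))
          + xiM R v w (bdry R (Finsupp.single p (1:R))) := by
  intro n
  induction n with
  | zero =>
      intro p hl hp
      interval_cases hlen : p.length
      · exact absurd (List.length_eq_zero_iff.mp hlen) hp.1
  | succ n ih =>
      intro p hl hp
      have hxnil : xiM R v w (Finsupp.single ([]:List V) (1:R)) = 0 := by
        rw [xiM_single, show xifun R v w [] = 0 from rfl, smul_zero]
      have hLnil : LM R v w (Finsupp.single ([]:List V) (1:R)) = 0 := by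
        rw [LM_single, if_neg (by simp)]
      match p with
      | [a] =>
          have hb : bdry R (Finsupp.single [a] (1:R)) = Finsupp.single [] 1 := by
            rw [bdry_single]; simp
          rw [hb, hLnil, hxnil]
          by_cases hav : a = v
          · rw [hav]
            rw [tauM_single, if_pos (by rw [sg_cons, sg_nil, rr_v]; exact List.isChain_singleton _)]
            rw [sg_cons, sg_nil, rr_v]
            rw [LM_single, if_pos (by simp)]
            simp only [List.length_cons, List.length_nil, Nat.add_sub_cancel, pow_zero, one_smul,
              List.nil_append, List.cons_append]
            rw [bdry_single_cons, show bdry R (Finsupp.single [w] (1:R)) = Finsupp.single [] 1 from by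
              rw [bdry_single]; simp]
            rw [C_single]
            abel
          · rw [tauM_single, if_pos (by rw [sg_cons, sg_nil, rr_of_ne v w hav]
                                        exact List.isChain_singleton _)]
            rw [sg_cons, sg_nil, rr_of_ne v w hav]
            rw [LM_single, if_neg (by simpa using hav)]
            simp
      | a :: b :: t' =>
          have he : G.Edge a b := allowed_cons_edge hp
          have ht : IsAllowed G (b :: t') := allowed_tail hp
          have hlt : (b :: t').length ≤ n := by
            simp at hl ⊢; omega
          by_cases hav : a = v
          · -- a = v hence b = w
            have hbw : b = w := h.hout b (by rwa [hav] at he)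
            rw [hav, hbw]
            rw [hbw] at ht
            have e0 : tauM R v w (Finsupp.single (v :: w :: t') (1:R)) = 0 :=
              tau_vw_zero (R := R) h t' 1
            have eL : LM R v w (Finsupp.single (v :: w :: t') (1:R))
                = C R v (C R w (LM R v w (Finsupp.single t' 1))) := by
              rw [show (Finsupp.single (v :: w :: t') (1:R)) = C R v (C R w (Finsupp.single t' 1))
                   from by rw [C_single, C_single], L_CC R v w (cd_vw h)]
            have e3 : bdry R (Finsupp.single (v :: w :: t') (1:R))
                = Finsupp.single (w :: t') 1 - Finsupp.single (v :: t') 1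
                  + C R v (C R w (bdry R (Finsupp.single t' 1))) := by
              rw [bdry_single_cons, bdry_single_cons, map_sub, C_single]
              abel
            rw [e0, eL, e3]
            rw [map_add, map_add, map_sub, map_sub]
            rw [xi_CC R v w (cd_vw h), L_CC R v w (cd_vw h)]
            rw [show xiM R v w (Finsupp.single (w :: t') (1:R)) = 0 from by
              rw [xiM_single, xifun_allowed (R := R) h _ ht, smul_zero]]
            rw [bdry_C, bdry_C]
            rw [show (Finsupp.single (w :: t') (1:R)) = C R w (Finsupp.single t' 1)
                 from (C_single R w t' 1).symm]
            rw [L_C R v w (Ne.symm (cd_vw h))]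
            rw [xiM_single]
            cases t' with
            | nil =>
                rw [show xifun R v w [v] = 0 from by
                  rw [xifun_cons, if_neg (by rintro ⟨-, hh, -⟩; exact hh rfl)]
                  rw [show xifun R v w [] = 0 from rfl]
                  simp]
                rw [show LM R v w (Finsupp.single [v] (1:R)) = Finsupp.single [v, w] 1 from by
                  rw [LM_single, if_pos (by simp)]; simp]
                rw [hLnil, bdry_single_nil]
                simp only [map_zero, smul_zero, zero_sub, add_zero, sub_zero, zero_add, neg_zero,
                  sub_self]
                try abel
            | cons c m =>
                have ht'' : IsAllowed G (c :: m) := allowed_tail ht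
                have hwc : G.Edge w c := allowed_cons_edge ht
                have hlt' : (c :: m).length ≤ n := le_trans (by simp) hlt
                have hLv : LM R v w (Finsupp.single (v :: c :: m) (1:R))
                    = - C R v (LM R v w (Finsupp.single (c :: m) 1)) := LM_cons₂ R v w v c m 1
                rw [hLv]
                have hxv : xifun R v w (v :: c :: m)
                    = (if v ∉ (c :: m).dropLast
                        then Finsupp.single (v :: w :: sg v w (c :: m)) (1:R) else 0) := by
                  rw [xifun_cons, xifun_allowed (R := R) h _ ht'', Finsupp.mapDomain_zero, sub_zero]
                  have hcond : (v = v ∧ (c :: m) ≠ [] ∧ (c :: m).head? ≠ some w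
                      ∧ DefFree v w (c :: m) ∧ v ∉ (c :: m).dropLast)
                      ↔ (v ∉ (c :: m).dropLast) := by
                    constructor
                    · rintro ⟨-, -, -, -, hx⟩; exact hx
                    · intro hx
                      refine ⟨rfl, by simp, ?_, DefFree_of_allowed h _ ht'', hx⟩
                      simp only [List.head?_cons, ne_eq, Option.some_inj]
                      exact fun hh => (G.edge_ne w c hwc) hh.symm
                  rw [if_congr hcond rfl rfl]
                rw [hxv]
                have htau : tauM R v w (Finsupp.single (c :: m) (1:R))
                    = (if v ∉ (c :: m).dropLast
                        then Finsupp.single (sg v w (c :: m)) (1:R) else 0) := by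
                  rw [tauM_single]
                  have hcond : List.Chain' (· ≠ ·) (sg v w (c :: m)) ↔ (v ∉ (c :: m).dropLast) := by
                    rw [reg_iff h _ ht'', hasVW_iff_mem h _ ht'']
                  rw [if_congr hcond rfl rfl]
                have ihc := congrArg (fun z => C R v (C R w z)) (ih (c :: m) hlt' ht'')
                simp only [map_sub, map_add] at ihc
                rw [htau] at ihc
                have hpush : (C R v) ((C R w) (if v ∉ (c :: m).dropLast
                      then (Finsupp.single (sg v w (c :: m)) (1:R)) else 0))
                    = (if v ∉ (c :: m).dropLast
                      then Finsupp.single (v :: w :: sg v w (c :: m)) (1:R) else 0) := by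
                  split
                  · rw [C_single, C_single]
                  · rw [map_zero, map_zero]
                rw [hpush, C_single, C_single] at ihc
                have hif := sub_eq_iff_eq_add.mp ihc
                rw [one_smul, hif]
                simp only [map_sub, map_add]
                abel
          · -- a ≠ v
            have e1 := tau_cons_of_ne (R := R) h hp hav (1:R)
            have e2 := LM_cons₂ R v w a b t' (1:R)
            have e3 : bdry R (Finsupp.single (a :: b :: t') (1:R))
                = Finsupp.single (b :: t') 1 - C R a (bdry R (Finsupp.single (b :: t') 1)) :=
              bdry_single_cons R a (b :: t') 1
            rw [e1, e2, e3, map_neg, bdry_C, map_sub, map_sub]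
            rw [L_C R v w hav, xi_C R v w hav]
            rw [show xiM R v w (Finsupp.single (b :: t') (1:R)) = 0 from by
              rw [xiM_single, xifun_allowed (R := R) h _ ht, smul_zero]]
            have ihc := congrArg (C R a) (ih (b :: t') hlt ht)
            simp only [map_sub, map_add] at ihc
            have hif := sub_eq_iff_eq_add.mp ihc
            rw [show (Finsupp.single (a :: b :: t') (1:R)) = C R a (Finsupp.single (b :: t') 1)
                 from (C_single R a _ 1).symm]
            rw [hif]
            try simp only [map_sub, map_add]
            abel

end Collapse
end
section part6
variable {V : Type} (R : Type) [CommRing R]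
namespace Collapse
open Finsupp

/-- Two endomorphisms agreeing on singles from `S` agree on `supported S`. -/
lemma supported_ops {S : Set (List V)} {T T' : (List V →₀ R) →ₗ[R] (List V →₀ R)}
    (h1 : ∀ l ∈ S, T (Finsupp.single l 1) = T' (Finsupp.single l 1)) :
    ∀ x ∈ Finsupp.supported R R S, T x = T' x := by
  intro x hx
  rw [Finsupp.supported_eq_span_single] at hx
  induction hx using Submodule.span_induction with
  | mem x hxx =>
      obtain ⟨l, hl, rfl⟩ := hxx
      exact h1 l hl
  | zero => simp
  | add x y hx hy ihx ihy => rw [map_add, map_add, ihx, ihy]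
  | smul a x hx ihx => rw [map_smul, map_smul, ihx]

lemma supported_map {S S' : Set (List V)} {T : (List V →₀ R) →ₗ[R] (List V →₀ R)}
    (h1 : ∀ l ∈ S, T (Finsupp.single l 1) ∈ Finsupp.supported R R S') :
    ∀ x ∈ Finsupp.supported R R S, T x ∈ Finsupp.supported R R S' := by
  intro x hx
  rw [Finsupp.supported_eq_span_single] at hx
  induction hx using Submodule.span_induction with
  | mem x hxx =>
      obtain ⟨l, hl, rfl⟩ := hxx
      exact h1 l hl
  | zero => simp
  | add x y hx hy ihx ihy => rw [map_add]; exact add_mem ihx ihy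
  | smul a x hx ihx => rw [map_smul]; exact Submodule.smul_mem _ _ ihx

variable {G G' : DiGraph V} {u v w : V}

lemma pmod_def (G : DiGraph V) (n : ℕ) :
    PMod R G n = Finsupp.supported R R {p | IsAllowed G p ∧ p.length = n + 1} := rfl

lemma pmod_le_allowed (G : DiGraph V) (n : ℕ) :
    PMod R G n ≤ Finsupp.supported R R {p | IsAllowed G p} :=
  Finsupp.supported_mono (fun _ hp => hp.1)

lemma cd_sub (h : CData G G' u v w) : Subdigraph G' G :=
  ⟨by rw [h.hverts]; exact Set.diff_subset, fun a b hab => ((h.hedge a b).mp hab).1⟩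

lemma tau_maps (h : CData G G' u v w) (n : ℕ) {x : List V →₀ R}
    (hx : x ∈ PMod R G n) : tauM R v w x ∈ PMod R G' n := by
  refine supported_map R (S := {p | IsAllowed G p ∧ p.length = n + 1}) ?_ x hx
  intro l hl
  rw [tauM_single]
  split
  · next hreg =>
      refine Finsupp.single_mem_supported R _ ⟨sg_allowed h l hl.1 hreg, ?_⟩
      rw [show (sg v w l).length = l.length from List.length_map _, hl.2]
  · exact Submodule.zero_mem _

lemma L_maps (h : CData G G' u v w) (n : ℕ) {x : List V →₀ R}
    (hx : x ∈ PMod R G n) : LM R v w x ∈ PMod R G (n + 1) := by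
  refine supported_map R (S := {p | IsAllowed G p ∧ p.length = n + 1}) ?_ x hx
  intro l hl
  rw [LM_single]
  split
  · next hlast =>
      refine Submodule.smul_mem _ _ (Finsupp.single_mem_supported R _ ⟨allowed_append_w h hl.1 hlast, ?_⟩)
      rw [List.length_append, hl.2]
      rfl
  · exact Submodule.zero_mem _

lemma psi_fix (h : CData G G' u v w) (n : ℕ) {x : List V →₀ R}
    (hx : x ∈ PMod R G' n) : psiM R v w x = x := by
  refine supported_ops R (S := {p | IsAllowed G' p ∧ p.length = n + 1})
    (T := psiM R v w) (T' := LinearMap.id) ?_ x hx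
  intro l hl
  exact psi_fix_single (R := R) h hl.1 1

lemma tau_fix (h : CData G G' u v w) (n : ℕ) {x : List V →₀ R}
    (hx : x ∈ PMod R G' n) : tauM R v w x = x := by
  refine supported_ops R (S := {p | IsAllowed G' p ∧ p.length = n + 1})
    (T := tauM R v w) (T' := LinearMap.id) ?_ x hx
  intro l hl
  exact tau_fix_single (R := R) h hl.1 1

/-- summed identity 1 -/
lemma I1_sum (h : CData G G' u v w) {x : List V →₀ R}
    (hx : x ∈ Finsupp.supported R R {p | IsAllowed G p}) :
    bdry R (tauM R v w x) = psiM R v w (bdry R x) := by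
  refine supported_ops R (S := {p | IsAllowed G p})
    (T := (bdry R).comp (tauM R v w)) (T' := (psiM R v w).comp (bdry R)) ?_ x hx
  intro l hl
  exact key_I1 (R := R) h l.length l le_rfl hl

/-- summed identity 2 -/
lemma I2_sum (h : CData G G' u v w) {x : List V →₀ R}
    (hx : x ∈ Finsupp.supported R R {p | IsAllowed G p}) :
    tauM R v w x - x
      = bdry R (LM R v w x) + LM R v w (bdry R x) + xiM R v w (bdry R x) := by
  refine supported_ops R (S := {p | IsAllowed G p})
    (T := tauM R v w - LinearMap.id)
    (T' := (bdry R).comp (LM R v w) + (LM R v w).comp (bdry R) + (xiM R v w).comp (bdry R)) ?_ x hx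
  intro l hl
  exact key_I2 (R := R) h l.length l le_rfl hl

lemma omega_le_pmod (G : DiGraph V) (n : ℕ) : OmegaMod R G n ≤ PMod R G n := by
  cases n with
  | zero => exact le_rfl
  | succ n => exact inf_le_left

lemma mem_omega_succ {G : DiGraph V} {n : ℕ} {x : List V →₀ R} :
    x ∈ OmegaMod R G (n+1) ↔ x ∈ PMod R G (n+1) ∧ bdry R x ∈ PMod R G n := by
  rw [show OmegaMod R G (n+1)
      = PMod R G (n+1) ⊓ Submodule.comap (bdry (V := V) R) (PMod R G n) from rfl]
  rw [Submodule.mem_inf, Submodule.mem_comap]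

lemma mem_omega_of {G : DiGraph V} {n : ℕ} {x : List V →₀ R}
    (h1 : x ∈ PMod R G n) (h2 : bdry R x = 0) : x ∈ OmegaMod R G n := by
  cases n with
  | zero => exact h1
  | succ n => exact mem_omega_succ R |>.mpr ⟨h1, by rw [h2]; exact Submodule.zero_mem _⟩

/-- Step lemma, surjectivity side. -/
lemma step_S (h : CData G G' u v w) (n : ℕ) (x : List V →₀ R) (hx : x ∈ cyc R G n) :
    ∃ y ∈ cyc R G' n, x - y ∈ bds R G n := by
  have hxP : x ∈ PMod R G n := omega_le_pmod R G n hx.1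
  have hxK : bdry R x = 0 := LinearMap.mem_ker.mp hx.2
  have hxS : x ∈ Finsupp.supported R R {p | IsAllowed G p} := pmod_le_allowed R G n hxP
  refine ⟨tauM R v w x, ?_, ?_⟩
  · have h1 : tauM R v w x ∈ PMod R G' n := tau_maps (R := R) h n hxP
    have h2 : bdry R (tauM R v w x) = 0 := by
      rw [I1_sum (R := R) h hxS, hxK, map_zero]
    exact ⟨mem_omega_of R h1 h2, LinearMap.mem_ker.mpr h2⟩
  · have h2 : tauM R v w x - x = bdry R (LM R v w x) := by
      rw [I2_sum (R := R) h hxS, hxK, map_zero, map_zero, add_zero, add_zero]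
    have hLomega : LM R v w x ∈ OmegaMod R G (n+1) := by
      refine mem_omega_succ R |>.mpr ⟨L_maps (R := R) h n hxP, ?_⟩
      rw [← h2]
      exact sub_mem (pmod_mono R (cd_sub h) n (tau_maps (R := R) h n hxP)) hxP
    refine Submodule.mem_map.mpr ⟨-(LM R v w x), Submodule.neg_mem _ hLomega, ?_⟩
    rw [map_neg, ← h2]
    abel

/-- Step lemma, injectivity side. -/
lemma step_I (h : CData G G' u v w) (n : ℕ) (x : List V →₀ R)
    (hx : x ∈ cyc R G' n) (hb : x ∈ bds R G n) : x ∈ bds R G' n := by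
  obtain ⟨z, hz, rfl⟩ := Submodule.mem_map.mp hb
  have hzP : z ∈ PMod R G (n+1) := (mem_omega_succ R |>.mp hz).1
  have hzS : z ∈ Finsupp.supported R R {p | IsAllowed G p} := pmod_le_allowed R G (n+1) hzP
  have hxP : bdry R z ∈ PMod R G' n := omega_le_pmod R G' n hx.1
  have hkey : bdry R (tauM R v w z) = bdry R z := by
    rw [I1_sum (R := R) h hzS, psi_fix (R := R) h n hxP]
  refine Submodule.mem_map.mpr ⟨tauM R v w z, ?_, hkey⟩
  refine mem_omega_succ R |>.mpr ⟨tau_maps (R := R) h (n+1) hzP, ?_⟩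
  rw [hkey]
  exact hxP

end Collapse
end part6
section part7
variable {V : Type} (R : Type) [CommRing R]
namespace Collapse
open Finsupp

/-- The homological relation between a sub-digraph and an ambient digraph needed for
the induced map on path homology to be an isomorphism. -/
def Good (H G : DiGraph V) : Prop :=
  Subdigraph H G ∧
    ∀ n : ℕ, (∀ x ∈ cyc R G n, ∃ y ∈ cyc R H n, x - y ∈ bds R G n) ∧
      (∀ x ∈ cyc R H n, x ∈ bds R G n → x ∈ bds R H n)

lemma good_refl (G : DiGraph V) : Good R G G := by
  refine ⟨⟨subset_rfl, fun _ _ he => he⟩, fun n => ⟨fun x hx => ⟨x, hx, ?_⟩, fun x _ hb => hb⟩⟩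
  rw [sub_self]
  exact Submodule.zero_mem _

lemma good_trans {A B D : DiGraph V} (h1 : Good R B A) (h2 : Good R D B) : Good R D A := by
  refine ⟨⟨h2.1.1.trans h1.1.1, fun a b he => h1.1.2 a b (h2.1.2 a b he)⟩, fun n => ⟨?_, ?_⟩⟩
  · intro x hx
    obtain ⟨y, hy, hxy⟩ := (h1.2 n).1 x hx
    obtain ⟨z, hz, hyz⟩ := (h2.2 n).1 y hy
    refine ⟨z, hz, ?_⟩
    have : x - z = (x - y) + (y - z) := by abel
    rw [this]
    exact add_mem hxy (bds_mono R h1.1 n hyz)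
  · intro x hx hb
    have hx' : x ∈ cyc R B n := cyc_mono R h2.1 n hx
    exact (h2.2 n).2 x hx ((h1.2 n).2 x hx' hb)

lemma good_step {P Q : DiGraph V × (V → ℝ)} (hstep : OneStepCollapse P Q) :
    Good R Q.1 P.1 := by
  obtain ⟨u, v, w, -, huv, hvw, hin, hout, huw, hverts, hedge, -⟩ := hstep
  have h : CData P.1 Q.1 u v w := ⟨huv, hvw, huw, hin, hout, hverts, hedge⟩
  exact ⟨cd_sub h, fun n =>
    ⟨fun x hx => step_S (R := R) h n x hx, fun x hx hb => step_I (R := R) h n x hx hb⟩⟩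

lemma good_rtg {P Q : DiGraph V × (V → ℝ)}
    (hr : Relation.ReflTransGen OneStepCollapse P Q) : Good R Q.1 P.1 := by
  induction hr with
  | refl => exact good_refl R _
  | tail hab hbc ih => exact good_trans R ih (good_step R hbc)

lemma inducedQ_mkQ {H G : DiGraph V} (hsub : Subdigraph H G) (n : ℕ) (x : List V →₀ R) :
    inducedQ R hsub n ((bds R H n).mkQ x) = (bds R G n).mkQ x := by
  rw [inducedQ, Submodule.mkQ_apply, Submodule.mkQ_apply, Submodule.mapQ_apply,
    LinearMap.id_apply]

end Collapse
end part7

theorem collapse_path_homology_iso' {V : Type} (R : Type) [CommRing R]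
    (G Gt : DiGraph V) (f : V → ℝ)
    (hcol : FullCollapse (G, f) (Gt, f))
    (hsub : Subdigraph Gt G) :
    ∀ n : ℕ, Function.Bijective (inducedH R hsub n) := by
  classical
  have good : Collapse.Good R Gt G := Collapse.good_rtg R hcol.1
  intro n
  constructor
  · -- injectivity
    intro a b hab
    obtain ⟨x, hx, hxe⟩ := Submodule.mem_map.mp a.2
    obtain ⟨y, hy, hye⟩ := Submodule.mem_map.mp b.2
    have h1 : inducedQ R hsub n a.1 = inducedQ R hsub n b.1 := by
      have := congrArg Subtype.val hab
      simpa [inducedH, LinearMap.restrict_apply] using this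
    rw [← hxe, ← hye, Collapse.inducedQ_mkQ, Collapse.inducedQ_mkQ] at h1
    rw [Submodule.mkQ_apply, Submodule.mkQ_apply, Submodule.Quotient.eq] at h1
    have hxyc : x - y ∈ cyc R Gt n := sub_mem hx hy
    have hxyb : x - y ∈ bds R Gt n := (good.2 n).2 _ hxyc h1
    apply Subtype.ext
    rw [← hxe, ← hye, Submodule.mkQ_apply, Submodule.mkQ_apply, Submodule.Quotient.eq]
    exact hxyb
  · -- surjectivity
    rintro ⟨s, hs⟩
    obtain ⟨x, hx, hxe⟩ := Submodule.mem_map.mp hs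
    obtain ⟨y, hy, hxy⟩ := (good.2 n).1 x hx
    have hqmem : (bds R Gt n).mkQ y ∈ PathHomology R Gt n :=
      Submodule.mem_map.mpr ⟨y, hy, rfl⟩
    refine ⟨⟨(bds R Gt n).mkQ y, hqmem⟩, ?_⟩
    apply Subtype.ext
    have h2 : (inducedH R hsub n (⟨(bds R Gt n).mkQ y, hqmem⟩ : PathHomology R Gt n) : _).1
        = inducedQ R hsub n ((bds R Gt n).mkQ y) := by
      simp [inducedH, LinearMap.restrict_apply]
    rw [h2, Collapse.inducedQ_mkQ]
    show (bds R G n).mkQ y = s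
    rw [← hxe, Submodule.mkQ_apply, Submodule.mkQ_apply, Submodule.Quotient.eq]
    have : y - x = -(x - y) := by abel
    rw [this]
    exact Submodule.neg_mem _ hxy

/-- Let `f` be a discrete Morse function on a digraph `G` whose
zero-points all have out-degree and in-degree 1, and let `G̃` be the full `M`-collapse
of `(G, f)` (which is in particular a sub-digraph of `G`). Then the inclusion
`i : G̃ → G` induces isomorphisms on all path homology groups. -/
theorem collapse_path_homology_iso (G Gt : DiGraph V) (f : V → ℝ)
    (hf : IsMorse G f)
    (hdeg : ∀ v ∈ G.verts, f v = 0 → (∃! u, G.Edge u v) ∧ (∃! w, G.Edge v w))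
    (hcol : FullCollapse (G, f) (Gt, f))
    (hsub : Subdigraph Gt G) :
    ∀ n : ℕ, Function.Bijective (inducedH R hsub n) :=
  fun n => collapse_path_homology_iso' R G Gt f hcol hsub n
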